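/- There is no infinite 7/3-power-free binary word w for which there exists a constant C such that at every position of w there begins a square of length at most C. -/

import Mathlib

def mu (w : List Bool) : List Bool := w.flatMap (fun b => if b then [true, false] else [false, true])

def isPow (beta : ℚ) (w : List Bool) : Prop :=
  ∃ (n : ℕ) (x x' : List Bool), x ≠ [] ∧ x' <+: x ∧
    w = (List.replicate n x).flatten ++ x' ∧ beta = n + (x'.length : ℚ) / (x.length : ℚ)

def PowFree (a : ℚ) (w : List Bool) : Prop :=
  ∀ v, v <:+: w → ∀ beta : ℚ, a ≤ beta → ¬ isPow beta v

def OverlapFree (w : List Bool) : Prop :=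
  ∀ u v : List Bool, u ≠ [] → ¬ (u ++ v ++ u ++ v ++ u) <:+: w

def seg (w : ℕ → Bool) (i n : ℕ) : List Bool := (List.range n).map (fun j => w (i + j))

def FactorOf (v : List Bool) (w : ℕ → Bool) : Prop := ∃ i, v = seg w i v.length

def PowFreeInf (a : ℚ) (w : ℕ → Bool) : Prop :=
  ∀ v, FactorOf v w → ∀ beta : ℚ, a ≤ beta → ¬ isPow beta v

def OverlapFreeInf (w : ℕ → Bool) : Prop :=
  ∀ u v : List Bool, u ≠ [] → ¬ FactorOf (u ++ v ++ u ++ v ++ u) w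

def SqLenAt (w : ℕ → Bool) (i m : ℕ) : Prop := ∀ j < m, w (i + j) = w (i + m + j)

def SqAt (w : ℕ → Bool) (i : ℕ) : Prop := ∃ m, 0 < m ∧ SqLenAt w i m

lemma seg_length (w : ℕ → Bool) (i n : ℕ) : (seg w i n).length = n := by simp [seg]

lemma factorOf_seg (w : ℕ → Bool) (t L : ℕ) : FactorOf (seg w t L) w :=
  ⟨t, by rw [seg_length]⟩

lemma seg_succ (w : ℕ → Bool) (i n : ℕ) : seg w i (n+1) = seg w i n ++ [w (i+n)] := by
  simp [seg, List.range_succ]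

example (w : ℕ → Bool) (t : ℕ) : seg w t 3 = [w t, w (t+1), w (t+2)] := by
  simp [seg, List.range_succ]

lemma mu_append (a b : List Bool) : mu (a ++ b) = mu a ++ mu b := by
  simp [mu]

lemma mu_length (a : List Bool) : (mu a).length = 2 * a.length := by
  induction a with
  | nil => rfl
  | cons x xs ih => cases x <;> simp [mu] at ih ⊢ <;> omega

lemma mu_join (n : ℕ) (x : List Bool) :
    mu ((List.replicate n x).flatten) = (List.replicate n (mu x)).flatten := by
  induction n with
  | zero => rfl
  | succ k ih => simp [List.replicate_succ, mu_append, ih]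

lemma pat_cube {w : ℕ → Bool} (pf : PowFreeInf (7/3) w) (t : ℕ)
    (h1 : w (t+1) = w t) (h2 : w (t+2) = w t) : False := by
  apply pf (seg w t 3) (factorOf_seg w t 3) 3 (by norm_num)
  refine ⟨3, [w t], [], by simp, List.nil_prefix, ?_, by norm_num⟩
  simp [seg, List.range_succ, List.replicate, h1, h2]

lemma pat_alt5 {w : ℕ → Bool} (pf : PowFreeInf (7/3) w) (t : ℕ)
    (h2 : w (t+2) = w t) (h3 : w (t+3) = w (t+1)) (h4 : w (t+4) = w t) : False := by
  apply pf (seg w t 5) (factorOf_seg w t 5) (5/2) (by norm_num)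
  refine ⟨2, [w t, w (t+1)], [w t], by simp, ⟨[w (t+1)], rfl⟩, ?_, by norm_num⟩
  simp [seg, List.range_succ, List.replicate, h2, h3, h4]

lemma pat_73 {w : ℕ → Bool} (pf : PowFreeInf (7/3) w) (t : ℕ)
    (h3 : w (t+3) = w t) (h4 : w (t+4) = w (t+1)) (h5 : w (t+5) = w (t+2))
    (h6 : w (t+6) = w t) : False := by
  apply pf (seg w t 7) (factorOf_seg w t 7) (7/3) (by norm_num)
  refine ⟨2, [w t, w (t+1), w (t+2)], [w t], by simp, ⟨[w (t+1), w (t+2)], rfl⟩, ?_, by norm_num⟩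
  simp [seg, List.range_succ, List.replicate, h3, h4, h5, h6]

lemma bool_flip {x y : Bool} (h : x ≠ y) : y = !x := by cases x <;> cases y <;> simp_all

lemma no_opp {w : ℕ → Bool} (pf : PowFreeInf (7/3) w) :
    ∀ d, Odd d → ∀ u, 1 ≤ u → w u = w (u+1) → w (u+d) = w (u+d+1) → False := by
  intro d
  induction d using Nat.strong_induction_on with
  | _ d ih =>
    intro hodd u hu h1 h2
    obtain ⟨k, hk⟩ := hodd
    by_cases hs : ∃ s, u < s ∧ s < u + d ∧ w s = w (s+1)
    · obtain ⟨s, hs1, hs2, hs3⟩ := hs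
      rcases Nat.even_or_odd (s - u) with he | ho
      · obtain ⟨k', hk'⟩ := he
        have hd : Odd (u + d - s) := ⟨k - k', by omega⟩
        have e : s + (u + d - s) = u + d := by omega
        exact ih (u+d-s) (by omega) hd s (by omega) hs3 (by rw [e]; exact h2)
      · have e : u + (s - u) = s := by omega
        exact ih (s - u) (by omega) ho u hu h1 (by rw [e]; exact hs3)
    · push_neg at hs
      by_cases hd1 : d = 1
      · subst hd1
        exact pat_cube pf u h1.symm (h2.symm.trans h1.symm)
      · by_cases hd3 : d = 3
        · subst hd3
          obtain ⟨t, rfl⟩ : ∃ t, u = t + 1 := ⟨u - 1, by omega⟩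
          have A1 : w (t+2) = w (t+1) := h1.symm
          have A2 : w (t+5) = w (t+4) := h2.symm
          have e2 : w (t+3) = !w (t+2) := bool_flip (hs (t+2) (by omega) (by omega))
          have e3 : w (t+4) = !w (t+3) := bool_flip (hs (t+3) (by omega) (by omega))
          have e4 : w (t+4) = w (t+2) := by rw [e3, e2, Bool.not_not]
          by_cases h0 : w t = w (t+1)
          · exact pat_cube pf t h0.symm (A1.trans h0.symm)
          · have E3 : w (t+3) = w t := by
              rw [e2, A1, bool_flip h0, Bool.not_not]
            by_cases h6 : w (t+6) = w (t+4)
            · exact pat_cube pf (t+4) A2 h6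
            · have E6 : w (t+6) = w t := by
                rw [bool_flip (Ne.symm h6), e4, A1, bool_flip h0, Bool.not_not]
              exact pat_73 pf t E3 (e4.trans A1) (A2.trans e4) E6
        · -- d ≥ 5
          have a1 : w (u+2) = !w (u+1) := bool_flip (hs (u+1) (by omega) (by omega))
          have a2 : w (u+3) = !w (u+2) := bool_flip (hs (u+2) (by omega) (by omega))
          have a3 : w (u+4) = !w (u+3) := bool_flip (hs (u+3) (by omega) (by omega))
          have a4 : w (u+5) = !w (u+4) := bool_flip (hs (u+4) (by omega) (by omega))
          have b2 : w (u+3) = w (u+1) := by rw [a2, a1, Bool.not_not]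
          have b3 : w (u+4) = w (u+2) := by rw [a3, a2, Bool.not_not]
          have b4 : w (u+5) = w (u+1) := by rw [a4, a3, Bool.not_not]; exact b2
          exact pat_alt5 pf (u+1) b2 b3 b4

lemma bool_eq_of_not_flip {x y : Bool} (h : ¬ y = !x) : x = y := by
  cases x <;> cases y <;> simp_all

lemma exists_good {w : ℕ → Bool} (pf : PowFreeInf (7/3) w) :
    ∃ c, ∀ j, w (c + 2*j + 1) = !(w (c + 2*j)) := by
  by_cases h1 : ∀ j, w (1 + 2*j + 1) = !(w (1 + 2*j))
  · exact ⟨1, h1⟩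
  · push_neg at h1
    obtain ⟨j₀, hj₀⟩ := h1
    have hd1 : w (1 + 2*j₀) = w (1 + 2*j₀ + 1) := bool_eq_of_not_flip hj₀
    refine ⟨2, fun j => ?_⟩
    by_contra hj
    have hd2 : w (2 + 2*j) = w (2 + 2*j + 1) := bool_eq_of_not_flip hj
    rcases lt_or_ge (1 + 2*j₀) (2 + 2*j) with hlt | hle
    · have hodd : Odd (2 + 2*j - (1 + 2*j₀)) := ⟨j - j₀, by omega⟩
      have e : 1 + 2*j₀ + (2 + 2*j - (1 + 2*j₀)) = 2 + 2*j := by omega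
      exact no_opp pf _ hodd (1 + 2*j₀) (by omega) hd1 (by rw [e]; exact hd2)
    · have hlt' : 2 + 2*j < 1 + 2*j₀ := by omega
      have hodd : Odd (1 + 2*j₀ - (2 + 2*j)) := ⟨j₀ - j - 1, by omega⟩
      have e : 2 + 2*j + (1 + 2*j₀ - (2 + 2*j)) = 1 + 2*j₀ := by omega
      exact no_opp pf _ hodd (2 + 2*j) (by omega) hd2 (by rw [e]; exact hd1)

lemma isPow_mu {beta : ℚ} {v : List Bool} (h : isPow beta v) : isPow beta (mu v) := by
  obtain ⟨n, x, x', hx, hpre, hv, hbeta⟩ := h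
  refine ⟨n, mu x, mu x', ?_, ?_, ?_, ?_⟩
  · intro hmu
    apply hx
    cases x with
    | nil => rfl
    | cons a t => cases a <;> simp [mu] at hmu
  · obtain ⟨r, rfl⟩ := hpre
    exact ⟨mu r, (mu_append _ _).symm⟩
  · rw [hv, mu_append, mu_join]
  · rw [hbeta, mu_length, mu_length]
    push_cast
    rw [mul_div_mul_left _ _ (by norm_num : (2:ℚ) ≠ 0)]

lemma mu_seg {w : ℕ → Bool} {c : ℕ} (h : ∀ j, w (c + 2*j + 1) = !(w (c + 2*j))) (i : ℕ) :
    ∀ k, mu (seg (fun j => w (c + 2*j)) i k) = seg w (c + 2*i) (2*k) := by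
  intro k
  induction k with
  | zero => rfl
  | succ t ih =>
    have e1 : 2*(t+1) = 2*t + 1 + 1 := by ring
    rw [seg_succ, mu_append, ih, e1, seg_succ, seg_succ]
    have e2 : c + 2*i + (2*t+1) = c + 2*(i+t) + 1 := by ring
    have e3 : c + 2*i + 2*t = c + 2*(i+t) := by ring
    rw [e2, e3, h (i+t), List.append_assoc]
    congr 1
    show mu [w (c + 2*(i+t))] = [w (c + 2*(i+t))] ++ [!w (c + 2*(i+t))]
    cases w (c + 2*(i+t)) <;> rfl

lemma powfree_sub {w : ℕ → Bool} {c : ℕ} (pf : PowFreeInf (7/3) w)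
    (h : ∀ j, w (c + 2*j + 1) = !(w (c + 2*j))) :
    PowFreeInf (7/3) (fun j => w (c + 2*j)) := by
  intro v hv beta hbeta hpow
  obtain ⟨i, hi⟩ := hv
  have key : mu v = seg w (c + 2*i) (2 * v.length) := by
    conv_lhs => rw [hi]
    exact mu_seg h i v.length
  exact pf (mu v) ⟨c + 2*i, by rw [mu_length]; exact key⟩ beta hbeta (isPow_mu hpow)

lemma even_period {w : ℕ → Bool} {c : ℕ} (pf : PowFreeInf (7/3) w)
    (h : ∀ j, w (c + 2*j + 1) = !(w (c + 2*j))) (i m : ℕ) (hm : 0 < m)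
    (hsq : SqLenAt w (c + 2*i) m) : ∃ m', m = 2 * m' := by
  by_contra hodd
  have hom : ∃ k, m = 2*k + 1 := by
    rcases Nat.even_or_odd m with ⟨k, hk⟩ | ⟨k, hk⟩
    · exact absurd ⟨k, by omega⟩ hodd
    · exact ⟨k, hk⟩
  obtain ⟨k, hk⟩ := hom
  have nd : ∀ j, ¬ w (c + 2*j) = w (c + 2*j + 1) := by
    intro j hj
    rw [h j] at hj
    revert hj
    cases w (c + 2*j) <;> simp
  -- no doubles at positions c+2i+t for t+1 < m
  have nd2 : ∀ t, t + 1 < m → w (c + 2*i + t) ≠ w (c + 2*i + t + 1) := by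
    intro t ht heq
    have heq2 : w (c + 2*i + m + t) = w (c + 2*i + m + t + 1) := by
      have u1 := hsq t (by omega)
      have u2 := hsq (t+1) ht
      have e1 : c + 2*i + (t+1) = c + 2*i + t + 1 := by omega
      have e2 : c + 2*i + m + (t+1) = c + 2*i + m + t + 1 := by omega
      rw [e1, e2] at u2
      rw [← u1, ← u2]; exact heq
    rcases Nat.even_or_odd t with ⟨l, hl⟩ | ⟨l, hl⟩
    · apply nd (i + l)
      have e : c + 2*(i+l) = c + 2*i + t := by omega
      rw [e]; exact heq
    · apply nd (i + (m + t)/2)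
      have e : c + 2*(i + (m+t)/2) = c + 2*i + m + t := by omega
      rw [e]; exact heq2
  by_cases hm1 : m = 1
  · apply nd i
    have u := hsq 0 hm
    have e0 : c + 2*i + 0 = c + 2*i := by omega
    have e1 : c + 2*i + m + 0 = c + 2*i + 1 := by omega
    rw [e0, e1] at u; exact u
  · by_cases hm3 : m = 3
    · subst hm3
      have n0 : w (c + 2*i) ≠ w (c + 2*i + 1) := by
        have := nd2 0 (by omega)
        have e : c + 2*i + 0 = c + 2*i := by omega
        rw [e] at this; exact this
      have n1 : w (c + 2*i + 1) ≠ w (c + 2*i + 2) := nd2 1 (by omega)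
      have u := hsq 0 (by omega)
      have e0 : c + 2*i + 0 = c + 2*i := by omega
      have e1 : c + 2*i + 3 + 0 = c + 2*i + 3 := by omega
      rw [e0, e1] at u
      -- w (c+2i+2) = w (c+2i) = w (c+2i+3): double at c+2i+2
      apply nd (i + 1)
      have e2 : c + 2*(i+1) = c + 2*i + 2 := by omega
      rw [e2]
      have v2 : w (c + 2*i + 2) = w (c + 2*i) := by
        rw [bool_flip n1, bool_flip n0, Bool.not_not]
      rw [v2, u]
    · -- m odd >= 5
      have a1 : w (c+2*i+1) = !w (c+2*i) := by
        apply bool_flip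
        have := nd2 0 (by omega)
        have e : c + 2*i + 0 = c + 2*i := by omega
        rw [e] at this; exact this
      have a2 : w (c+2*i+2) = !w (c+2*i+1) := bool_flip (nd2 1 (by omega))
      have a3 : w (c+2*i+3) = !w (c+2*i+2) := bool_flip (nd2 2 (by omega))
      have a4 : w (c+2*i+4) = !w (c+2*i+3) := bool_flip (nd2 3 (by omega))
      have b2 : w (c+2*i+2) = w (c+2*i) := by rw [a2, a1, Bool.not_not]
      have b3 : w (c+2*i+3) = w (c+2*i+1) := by rw [a3, a2, Bool.not_not]
      have b4 : w (c+2*i+4) = w (c+2*i) := by rw [a4, a3, Bool.not_not]; exact b2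
      exact pat_alt5 pf (c+2*i) b2 b3 b4

lemma aux : ∀ C : ℕ, ∀ w : ℕ → Bool, PowFreeInf (7/3) w →
    (∀ i, ∃ m, 0 < m ∧ 2*m ≤ C ∧ SqLenAt w i m) → False := by
  intro C
  induction C using Nat.strong_induction_on with
  | _ C ih =>
    intro w pf hsq
    obtain ⟨c, hc⟩ := exists_good pf
    have hC2 : 2 ≤ C := by obtain ⟨m, hm, hmc, _⟩ := hsq 0; omega
    apply ih (C/2) (by omega) (fun j => w (c + 2*j)) (powfree_sub pf hc)
    intro i
    obtain ⟨m, hm, hmc, hs⟩ := hsq (c + 2*i)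
    obtain ⟨m', rfl⟩ := even_period pf hc i m hm hs
    refine ⟨m', by omega, by omega, ?_⟩
    intro j hj
    show w (c + 2*(i + j)) = w (c + 2*(i + m' + j))
    have h1 := hs (2*j) (by omega)
    have e1 : c + 2*(i+j) = c + 2*i + 2*j := by ring
    have e2 : c + 2*(i + m' + j) = c + 2*i + 2*m' + 2*j := by ring
    rw [e1, e2]
    exact h1

theorem stmt19 :
    ¬ ∃ (w : ℕ → Bool) (C : ℕ), PowFreeInf (7/3) w ∧
        ∀ i, ∃ m, 0 < m ∧ 2 * m ≤ C ∧ SqLenAt w i m := by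
  rintro ⟨w, C, pf, hsq⟩
  exact aux C w pf hsq
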